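/- arXiv:2208.01778 — 2 statements merged into one kernel-verified Lean document; each statement's English description precedes it below -/
import Mathlib

section
/- Let X be a pure d-dimensional finite simplicial complex, let z be an i-face, and let X_z = {x − z : z ⊆ x ∈ X} be the link of X at z, which is pure of dimension d−1−i. Then for every k ≥ i and every k-face x of X containing z, the canonical weights satisfy w_X(x) = C(k+1, i+1) · w_X(z) · w_{X_z}(x − z). -/
open Finset

variable {V : Type} [DecidableEq V]

/-- A (finite) simplicial complex: a nonempty collection of finite subsets of the vertex
type `V`, closed under taking subsets.  The empty face belongs to every complex. -/
def IsComplex (X : Finset (Finset V)) : Prop :=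
  X.Nonempty ∧ ∀ s ∈ X, ∀ t ⊆ s, t ∈ X

/-- The faces of `X` having exactly `j` vertices, i.e. of dimension `j - 1`. -/
def faceSet (X : Finset (Finset V)) (j : ℕ) : Finset (Finset V) :=
  X.filter fun s => s.card = j

/-- `X` is pure of dimension `d`: every face is contained in a face with `d + 1` vertices. -/
def IsPure (X : Finset (Finset V)) (d : ℕ) : Prop :=
  ∀ s ∈ X, ∃ t ∈ X, s ⊆ t ∧ t.card = d + 1

/-- The canonical weight of a face `x` of a pure `d`-dimensional complex `X`:
`w(x) = C(d+1, |x|)⁻¹ ⬝ |X(d)|⁻¹ ⬝ #{y ∈ X(d) : x ⊆ y}`. -/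
noncomputable def wt (X : Finset (Finset V)) (d : ℕ) (x : Finset V) : ℝ :=
  ((d + 1).choose x.card : ℝ)⁻¹ * ((faceSet X (d + 1)).card : ℝ)⁻¹ *
    (((faceSet X (d + 1)).filter fun y => x ⊆ y).card : ℝ)


/-- The link of `X` at a face `z`: `X_z = { x \ z : z ⊆ x ∈ X }`. -/
def link (X : Finset (Finset V)) (z : Finset V) : Finset (Finset V) :=
  (X.filter fun s => z ⊆ s).image fun s => s \ z

lemma faceSet_link (X : Finset (Finset V)) (z : Finset V) (j : ℕ) :
    faceSet (link X z) j
      = ((faceSet X (j + z.card)).filter fun s => z ⊆ s).image fun s => s \ z := by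
  ext t
  simp only [faceSet, link, mem_image, mem_filter]
  constructor
  · rintro ⟨⟨s, ⟨hs, hzs⟩, rfl⟩, hcard⟩
    refine ⟨s, ⟨⟨hs, ?_⟩, hzs⟩, rfl⟩
    have hle := card_le_card hzs
    rw [← hcard, card_sdiff_of_subset hzs]
    omega
  · rintro ⟨s, ⟨⟨hs, hcard⟩, hzs⟩, rfl⟩
    have hle := card_le_card hzs
    exact ⟨⟨s, ⟨hs, hzs⟩, rfl⟩, by rw [card_sdiff_of_subset hzs]; omega⟩

lemma sdiff_injOn (z : Finset V) {A : Finset (Finset V)}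
    (hA : ∀ s ∈ A, z ⊆ s) : Set.InjOn (fun s => s \ z) A := by
  intro a ha b hb h
  have := congrArg (fun t => t ∪ z) h
  simpa [sdiff_union_of_subset (hA a ha), sdiff_union_of_subset (hA b hb)] using this

/-- For a pure `d`-dimensional complex `X`, a face `z` (of dimension
`z.card - 1 ≤ d - 1`) and a face `x ⊇ z`, the canonical weights of `X` and of the link
`X_z` (which is pure of dimension `d - z.card`, i.e. `d - 1 - dim z`) satisfy
`w_X(x) = C(|x|, |z|) ⬝ w_X(z) ⬝ w_{X_z}(x \ z)`. -/
theorem weight_in_link (X : Finset (Finset V)) (d : ℕ)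
    (hX : IsComplex X) (hpure : IsPure X d)
    (z : Finset V) (hz : z ∈ X) (hzd : z.card ≤ d)
    (x : Finset V) (hx : x ∈ X) (hzx : z ⊆ x) :
    wt X d x = (x.card.choose z.card : ℝ) * wt X d z *
      wt (link X z) (d - z.card) (x \ z) := by
  obtain ⟨t, ht, hxt, htc⟩ := hpure x hx
  have hxd : x.card ≤ d + 1 := htc ▸ card_le_card hxt
  have hzxc : z.card ≤ x.card := card_le_card hzx
  have hdz : d - z.card + 1 = d + 1 - z.card := by omega
  -- top faces of the link
  have hlink : faceSet (link X z) (d - z.card + 1)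
      = ((faceSet X (d + 1)).filter fun s => z ⊆ s).image fun s => s \ z := by
    rw [faceSet_link, show d - z.card + 1 + z.card = d + 1 by omega]
  have hinj : ∀ (P : Finset V → Prop) [DecidablePred P],
      ((((faceSet X (d + 1)).filter fun s => z ⊆ s).image fun s => s \ z).filter
        fun y => P y).card
      = (((faceSet X (d + 1)).filter fun s => z ⊆ s).filter fun s => P (s \ z)).card := by
    intro P _
    rw [filter_image, card_image_of_injOn]
    intro a ha b hb h
    have ha' : z ⊆ a := (mem_filter.mp (mem_filter.mp ha).1).2
    have hb' : z ⊆ b := (mem_filter.mp (mem_filter.mp hb).1).2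
    have := congrArg (fun t => t ∪ z) h
    simpa [sdiff_union_of_subset ha', sdiff_union_of_subset hb'] using this
  -- the count of top faces of link containing x \ z equals count of top faces of X containing x
  have hcount : (((faceSet (link X z) (d - z.card + 1)).filter
      fun y => x \ z ⊆ y).card : ℝ)
      = (((faceSet X (d + 1)).filter fun y => x ⊆ y).card : ℝ) := by
    rw [hlink, hinj (fun y => x \ z ⊆ y)]
    congr 2
    rw [filter_filter]
    apply filter_congr
    intro s hs
    simp only [faceSet, mem_filter] at hs ⊢
    constructor
    · rintro ⟨hzs, hxz⟩
      have : x = x \ z ∪ z := (sdiff_union_of_subset hzx).symm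
      rw [this]
      exact union_subset (hxz.trans sdiff_le) hzs
    · intro hxs
      exact ⟨hzx.trans hxs, sdiff_subset_sdiff hxs (le_refl z)⟩
  -- total count of top faces of link = count of top faces containing z
  have htotal : ((faceSet (link X z) (d - z.card + 1)).card : ℝ)
      = (((faceSet X (d + 1)).filter fun y => z ⊆ y).card : ℝ) := by
    rw [hlink]
    norm_cast
    rw [card_image_of_injOn (sdiff_injOn z (fun s hs => (mem_filter.mp hs).2))]
  have hcardsd : (x \ z).card = x.card - z.card := card_sdiff_of_subset hzx
  -- nonzeroness
  have hNz : (((faceSet X (d + 1)).filter fun y => z ⊆ y).card : ℝ) ≠ 0 := by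
    obtain ⟨u, hu, hzu, huc⟩ := hpure z hz
    have : u ∈ (faceSet X (d + 1)).filter fun y => z ⊆ y := by
      simp [faceSet, hu, huc, hzu]
    exact_mod_cast Nat.cast_ne_zero.mpr (card_ne_zero_of_mem this)
  have hT : ((faceSet X (d + 1)).card : ℝ) ≠ 0 := by
    obtain ⟨u, hu, hzu, huc⟩ := hpure z hz
    have : u ∈ faceSet X (d + 1) := by simp [faceSet, hu, huc]
    exact_mod_cast Nat.cast_ne_zero.mpr (card_ne_zero_of_mem this)
  have hc1 : ((d + 1).choose x.card : ℝ) ≠ 0 := by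
    exact_mod_cast Nat.choose_pos hxd |>.ne'
  have hc2 : ((d + 1).choose z.card : ℝ) ≠ 0 := by
    exact_mod_cast Nat.choose_pos (by omega) |>.ne'
  have hc3 : ((d - z.card + 1).choose (x \ z).card : ℝ) ≠ 0 := by
    rw [hcardsd]
    exact_mod_cast Nat.choose_pos (by omega) |>.ne'
  have key : ((d + 1).choose x.card : ℝ) * (x.card.choose z.card) =
      ((d + 1).choose z.card) * ((d - z.card + 1).choose (x \ z).card) := by
    rw [hcardsd, hdz]
    exact_mod_cast congrArg Nat.cast (Nat.choose_mul (n := d + 1) hzxc)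
  unfold wt
  rw [hcount, htotal]
  field_simp
  linear_combination -(((faceSet X (d + 1)).filter fun y => x ⊆ y).card : ℝ) * key
end

section
/- Let X be a k-regular finite graph which is an α-skeleton expander, let F be a finite field, m ≤ k, and for each vertex v let T_v: F^m → F^{E(v)} ≅ F^k be an injective linear map with image a code C_v of relative distance ≥ ε, where ε > α. Define the sheaf F on X by F(v) = F^m, F(e) = F for edges e, and res_{e←v} = (projection to coordinate e) ∘ T_v. Then every nonzero global section f ∈ Z⁰(X,F) satisfies ‖f‖_Ham ≥ ε − α; i.e., the 0-cocycle code Z⁰(X,F) ⊆ (F^m)^{X(0)} has relative distance at least ε − α. -/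
open Finset

variable {V : Type} [DecidableEq V]

open scoped Classical

/-- Let `X` be a `k`-regular finite graph with `n` vertices which is an
`α`-skeleton expander (for every vertex set `S`, `w(E(S)) ≤ w(S)² + α w(S)`, with the
canonical weights `w(v) = 1/n`, `w(e) = 2/(kn)`).  For each vertex `v` let
`T v : F^m → F^{E(v)} ≅ F^k` be an injective linear map whose image is a code of relative
distance `≥ ε`, where `ε > α`.  Then every nonzero global section `f` of the associated
sheaf (i.e. `(T u (f u))(e) = (T v (f v))(e)` for every edge `e = {u,v}`) satisfies
`‖f‖_Ham = #{v : f(v) ≠ 0}/n ≥ ε - α`: the 0-cocycle code has relative distance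
at least `ε - α`. -/
theorem expander_code_distance [Fintype V]
    (X : Finset (Finset V)) (hX : IsComplex X) (hpure : IsPure X 1)
    (F : Type) [Field F] [Fintype F] (k n m : ℕ) (hmk : m ≤ k)
    (hn : n = (Finset.univ.filter (fun v : V => ({v} : Finset V) ∈ X)).card)
    (hreg : ∀ v : V, ({v} : Finset V) ∈ X →
      ((faceSet X 2).filter (fun e => v ∈ e)).card = k)
    (α ε : ℝ) (hεα : α < ε)
    (hexp : ∀ S : Finset V, (∀ v ∈ S, ({v} : Finset V) ∈ X) →
      2 * (((faceSet X 2).filter (fun e => e ⊆ S)).card : ℝ) / (k * n)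
        ≤ ((S.card : ℝ) / n) ^ 2 + α * ((S.card : ℝ) / n))
    (T : ∀ v : V, ({v} : Finset V) ∈ X →
      ((Fin m → F) →ₗ[F] ({e : Finset V // e ∈ X ∧ e.card = 2 ∧ v ∈ e} → F)))
    (hinj : ∀ (v : V) (hv : ({v} : Finset V) ∈ X), Function.Injective (T v hv))
    (hdist : ∀ (v : V) (hv : ({v} : Finset V) ∈ X) (c : Fin m → F), c ≠ 0 →
      ε ≤ ((Finset.univ.filter
        (fun e : {e : Finset V // e ∈ X ∧ e.card = 2 ∧ v ∈ e} => T v hv c e ≠ 0)).card : ℝ) / k)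
    (f : (v : {v : V // ({v} : Finset V) ∈ X}) → Fin m → F)
    (hf : ∀ (u v : V) (hu : ({u} : Finset V) ∈ X) (hv : ({v} : Finset V) ∈ X)
      (hne : u ≠ v) (he : ({u, v} : Finset V) ∈ X),
      T u hu (f ⟨u, hu⟩) ⟨{u, v}, he, Finset.card_pair hne, Finset.mem_insert_self u {v}⟩
        = T v hv (f ⟨v, hv⟩) ⟨{u, v}, he, Finset.card_pair hne, by simp⟩)
    (hfne : f ≠ 0) :
    ε - α ≤ ((Finset.univ.filter
        (fun v : {v : V // ({v} : Finset V) ∈ X} => f v ≠ 0)).card : ℝ) / n := by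

  classical
  -- the support as a finset of `V`
  set S : Finset V :=
    univ.filter (fun v => ∃ hv : ({v} : Finset V) ∈ X, f ⟨v, hv⟩ ≠ 0) with hS_def
  have hSmem : ∀ v ∈ S, ({v} : Finset V) ∈ X := by
    intro v hv
    simp only [hS_def, mem_filter] at hv
    exact hv.2.choose
  have hSne : ∀ v (hv : ({v} : Finset V) ∈ X), v ∈ S → f ⟨v, hv⟩ ≠ 0 := by
    intro v hv hvS
    simp only [hS_def, mem_filter] at hvS
    obtain ⟨_, hv', hf'⟩ := hvS
    exact hf'
  have hmemS : ∀ v (hv : ({v} : Finset V) ∈ X), f ⟨v, hv⟩ ≠ 0 → v ∈ S := by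
    intro v hv h
    simp only [hS_def, mem_filter]
    exact ⟨mem_univ v, hv, h⟩
  -- cardinality of the support
  have hcard : ((Finset.univ.filter
      (fun v : {v : V // ({v} : Finset V) ∈ X} => f v ≠ 0)).card : ℝ) = (S.card : ℝ) := by
    norm_cast
    apply Finset.card_bij (fun v _ => v.1)
    · intro a ha
      exact hmemS a.1 a.2 (by simpa using (mem_filter.mp ha).2)
    · intro a _ b _ h
      exact Subtype.ext h
    · intro b hb
      simp only [hS_def, mem_filter] at hb
      obtain ⟨_, hb1, hb2⟩ := hb
      exact ⟨⟨b, hb1⟩, mem_filter.mpr ⟨mem_univ _, hb2⟩, rfl⟩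
  -- S is nonempty, n is positive
  obtain ⟨v₀, hv₀⟩ := Function.ne_iff.mp hfne
  have hv₀S : v₀.1 ∈ S := hmemS v₀.1 v₀.2 (by simpa using hv₀)
  have hScard : 0 < S.card := Finset.card_pos.mpr ⟨v₀.1, hv₀S⟩
  have hnpos : 0 < n := by
    rw [hn]
    exact Finset.card_pos.mpr ⟨v₀.1, mem_filter.mpr ⟨mem_univ _, v₀.2⟩⟩
  -- key: every edge containing v on which T v (f v) is nonzero lies inside S
  have hedge : ∀ (v : V) (hv : ({v} : Finset V) ∈ X)
      (e : {e : Finset V // e ∈ X ∧ e.card = 2 ∧ v ∈ e}),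
      T v hv (f ⟨v, hv⟩) e ≠ 0 → e.1 ⊆ S := by
    intro v hv e hne0
    obtain ⟨a, b, hab, habe⟩ := Finset.card_eq_two.mp e.2.2.1
    have hvab : v = a ∨ v = b := by
      have := e.2.2.2
      rw [habe] at this
      simpa using this
    -- write e = {v, u} with u ≠ v
    obtain ⟨u, hvu, heq⟩ : ∃ u, v ≠ u ∧ e.1 = ({v, u} : Finset V) := by
      rcases hvab with h | h
      · exact ⟨b, h ▸ hab, by rw [habe, h]⟩
      · exact ⟨a, h ▸ hab.symm, by rw [habe, h, Finset.pair_comm]⟩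
    have huX : ({u} : Finset V) ∈ X := by
      apply hX.2 e.1 e.2.1
      simp [heq]
    have heX : ({v, u} : Finset V) ∈ X := heq ▸ e.2.1
    have hee : e = ⟨({v, u} : Finset V), heX, Finset.card_pair hvu,
        Finset.mem_insert_self v {u}⟩ := Subtype.ext heq
    rw [hee] at hne0
    have hfu : f ⟨u, huX⟩ ≠ 0 := by
      intro h0
      apply hne0
      rw [hf v u hv huX hvu heX, h0, map_zero]
      rfl
    have hfv : f ⟨v, hv⟩ ≠ 0 := by
      intro h0
      apply hne0
      rw [h0, map_zero]
      rfl
    rw [heq]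
    exact Finset.insert_subset (hmemS v hv hfv) (Finset.singleton_subset_iff.mpr
      (hmemS u huX hfu))
  -- the edge set inside S
  set ES : Finset (Finset V) := (faceSet X 2).filter (fun e => e ⊆ S) with hES_def
  -- bound the count of nonzero coordinates at v
  have hcount : ∀ v (hv : ({v} : Finset V) ∈ X), v ∈ S →
      ((Finset.univ.filter
        (fun e : {e : Finset V // e ∈ X ∧ e.card = 2 ∧ v ∈ e} =>
          T v hv (f ⟨v, hv⟩) e ≠ 0)).card : ℕ)
        ≤ (ES.filter (fun e => v ∈ e)).card := by
    intro v hv hvS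
    apply Finset.card_le_card_of_injOn (fun e => e.1)
    · intro e he
      simp only [mem_coe, mem_filter, mem_univ, true_and] at he
      simp only [mem_coe, hES_def, faceSet, mem_filter]
      exact ⟨⟨⟨e.2.1, e.2.2.1⟩, hedge v hv e he⟩, e.2.2.2⟩
    · intro a _ b _ h
      exact Subtype.ext h
  -- double counting : the sum of the per-vertex counts is at most 2 |ES|
  have hdouble : ∑ v ∈ S, (ES.filter (fun e => v ∈ e)).card ≤ 2 * ES.card := by
    have h1 : ∀ v ∈ S, (ES.filter (fun e => v ∈ e)).card
        = ∑ e ∈ ES, (if v ∈ e then 1 else 0) := by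
      intro v _
      rw [Finset.card_filter]
    calc ∑ v ∈ S, (ES.filter (fun e => v ∈ e)).card
        = ∑ v ∈ S, ∑ e ∈ ES, (if v ∈ e then 1 else 0) := Finset.sum_congr rfl h1
      _ = ∑ e ∈ ES, ∑ v ∈ S, (if v ∈ e then 1 else 0) := Finset.sum_comm
      _ = ∑ e ∈ ES, (S.filter (fun v => v ∈ e)).card := by
          refine Finset.sum_congr rfl fun e _ => ?_
          rw [Finset.card_filter]
      _ ≤ ∑ e ∈ ES, e.card := by
          refine Finset.sum_le_sum fun e _ => ?_
          exact Finset.card_le_card fun x hx => (mem_filter.mp hx).2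
      _ = ∑ e ∈ ES, 2 := by
          refine Finset.sum_congr rfl fun e he => ?_
          simp only [hES_def, faceSet, mem_filter] at he
          exact he.1.2
      _ = 2 * ES.card := by rw [Finset.sum_const, smul_eq_mul, mul_comm]
  -- put it together over ℝ
  have hmain : ε * (S.card : ℝ) ≤ 2 * (ES.card : ℝ) / k := by
    calc ε * (S.card : ℝ) = ∑ _v ∈ S, ε := by rw [Finset.sum_const, nsmul_eq_mul, mul_comm]
      _ ≤ ∑ v ∈ S, ((ES.filter (fun e => v ∈ e)).card : ℝ) / k := by
          refine Finset.sum_le_sum fun v hvS => ?_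
          have hv := hSmem v hvS
          refine le_trans (hdist v hv (f ⟨v, hv⟩) (hSne v hv hvS)) ?_
          apply div_le_div_of_nonneg_right _ (by positivity)
          exact_mod_cast hcount v hv hvS
      _ = (∑ v ∈ S, ((ES.filter (fun e => v ∈ e)).card : ℝ)) / k := by
          rw [Finset.sum_div]
      _ ≤ 2 * (ES.card : ℝ) / k := by
          apply div_le_div_of_nonneg_right _ (by positivity)
          push_cast
          exact_mod_cast hdouble
  -- apply expansion
  have hexpS := hexp S hSmem
  rw [← hES_def] at hexpS
  have hw : (0 : ℝ) < (S.card : ℝ) / n := by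
    apply div_pos <;> exact_mod_cast ‹_›
  have hchain : ε * ((S.card : ℝ) / n) ≤ ((S.card : ℝ) / n) ^ 2 + α * ((S.card : ℝ) / n) := by
    refine le_trans ?_ hexpS
    rw [mul_comm (k:ℝ) (n:ℝ), div_mul_eq_div_div_swap, ← mul_div_assoc]
    exact div_le_div_of_nonneg_right hmain (Nat.cast_nonneg n)
  rw [hcard]
  nlinarith [hw, hchain]
end
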